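/- Let a ≥ 0, b > 0 and η ≥ 0. Then 1 + a²η² / (a·η² + b·η + a·b·η + (a+1)·b²/4) = 1 + a − a·b·(a+1)·(b/4 + η) / (a·η² + (a+1)·b·η + (a+1)·b²/4), and this quantity is at most 1 + a for all η ≥ 0, equals 1 at η = 0, and is non-decreasing in η. -/
import Mathlib


/-- Closed-form approximation guarantee of the ErrorTolerant mechanism on two links:
E(η) = 1 + a²η²/(aη² + bη + abη + (a+1)b²/4) equals
1 + a − ab(a+1)(b/4 + η)/(aη² + (a+1)bη + (a+1)b²/4), is at most 1 + a for all η ≥ 0,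
equals 1 at η = 0, and is non-decreasing in η. -/
theorem stmt15 (a b : ℝ) (ha : 0 ≤ a) (hb : 0 < b) :
    (∀ η : ℝ, 0 ≤ η →
      1 + a ^ 2 * η ^ 2 / (a * η ^ 2 + b * η + a * b * η + (a + 1) * b ^ 2 / 4)
        = 1 + a - a * b * (a + 1) * (b / 4 + η)
            / (a * η ^ 2 + (a + 1) * b * η + (a + 1) * b ^ 2 / 4)) ∧
    (∀ η : ℝ, 0 ≤ η →
      1 + a ^ 2 * η ^ 2 / (a * η ^ 2 + b * η + a * b * η + (a + 1) * b ^ 2 / 4) ≤ 1 + a) ∧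
    1 + a ^ 2 * (0:ℝ) ^ 2 / (a * (0:ℝ) ^ 2 + b * 0 + a * b * 0 + (a + 1) * b ^ 2 / 4) = 1 ∧
    (∀ η₁ η₂ : ℝ, 0 ≤ η₁ → η₁ ≤ η₂ →
      1 + a ^ 2 * η₁ ^ 2 / (a * η₁ ^ 2 + b * η₁ + a * b * η₁ + (a + 1) * b ^ 2 / 4)
        ≤ 1 + a ^ 2 * η₂ ^ 2 / (a * η₂ ^ 2 + b * η₂ + a * b * η₂ + (a + 1) * b ^ 2 / 4)) := by
  have hD : ∀ η : ℝ, 0 ≤ η →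
      0 < a * η ^ 2 + b * η + a * b * η + (a + 1) * b ^ 2 / 4 := by
    intro η hη
    nlinarith [mul_nonneg ha (sq_nonneg η), mul_nonneg hb.le hη,
      mul_nonneg (mul_nonneg ha hb.le) hη, sq_nonneg b, mul_pos hb hb]
  refine ⟨?_, ?_, ?_, ?_⟩
  · intro η hη
    have h1 := hD η hη
    have h2 : a * η ^ 2 + (a + 1) * b * η + (a + 1) * b ^ 2 / 4
        = a * η ^ 2 + b * η + a * b * η + (a + 1) * b ^ 2 / 4 := by ring
    rw [h2]
    field_simp
    ring
  · intro η hη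
    have h1 := hD η hη
    have : a ^ 2 * η ^ 2 / (a * η ^ 2 + b * η + a * b * η + (a + 1) * b ^ 2 / 4) ≤ a := by
      rw [div_le_iff₀ h1]
      nlinarith [mul_nonneg (mul_nonneg (mul_nonneg ha ha) hb.le) hη,
        mul_nonneg (mul_nonneg ha hb.le) hη, mul_nonneg ha (mul_pos hb hb).le]
    linarith
  · norm_num
  · intro η₁ η₂ h1 h12
    have hd1 := hD η₁ h1
    have hd2 := hD η₂ (le_trans h1 h12)
    have : a ^ 2 * η₁ ^ 2 / (a * η₁ ^ 2 + b * η₁ + a * b * η₁ + (a + 1) * b ^ 2 / 4)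
        ≤ a ^ 2 * η₂ ^ 2 / (a * η₂ ^ 2 + b * η₂ + a * b * η₂ + (a + 1) * b ^ 2 / 4) := by
      rw [div_le_div_iff₀ hd1 hd2]
      have h2 : 0 ≤ η₂ := le_trans h1 h12
      have hA : 0 ≤ a ^ 2 * (a + 1) * b * (η₁ * η₂) * (η₂ - η₁) := by
        apply mul_nonneg; apply mul_nonneg; apply mul_nonneg; apply mul_nonneg
        · exact sq_nonneg a
        · linarith
        · exact hb.le
        · exact mul_nonneg h1 h2
        · linarith
      have hB : 0 ≤ a ^ 2 * (a + 1) * b ^ 2 * ((η₂ - η₁) * (η₂ + η₁)) := by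
        apply mul_nonneg; apply mul_nonneg; apply mul_nonneg
        · exact sq_nonneg a
        · linarith
        · exact sq_nonneg b
        · apply mul_nonneg <;> linarith
      nlinarith [hA, hB]
    linarith
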